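/- arXiv:1407.5961 — 4 statements merged into one kernel-verified Lean document; each statement's English description precedes it below -/
import Mathlib

section
/- In a conservative abstraction G^a of a concrete game G, for any set S^a of abstract states, γ(upre_under(S^a)) ⊆ upre(γ(S^a)) ⊆ γ(upre_over(S^a)). -/
/-- Abstract transition relation: existential lift of the concrete transition function
to blocks of the partition `P`. -/
def absDelta {Q Au Ac : Type*} (δ : Q → Au → Ac → Q) (P : Set (Set Q))
    (s : Set Q) (σu : Au) (σc : Ac) (s' : Set Q) : Prop :=
  s ∈ P ∧ s' ∈ P ∧ ∃ q ∈ s, δ q σu σc ∈ s'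

theorem stmt_4 {Q Au Ac : Type*} [Fintype Q] [Fintype Au] [Fintype Ac]
    (δ : Q → Au → Ac → Q) (P : Set (Set Q)) (hP : Setoid.IsPartition P)
    (Sa : Set (Set Q)) (hSa : Sa ⊆ P) :
    let γ : Set (Set Q) → Set Q := Set.sUnion
    let upre : Set Q → Set Q := fun S => {q | ∃ σu : Au, ∀ σc : Ac, δ q σu σc ∈ S}
    let upreOver : Set (Set Q) :=
      {qa ∈ P | ∃ σu : Au, ∀ σc : Ac, ∃ ra ∈ Sa, absDelta δ P qa σu σc ra}
    let upreUnder : Set (Set Q) :=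
      {qa ∈ P | ∃ σu : Au, ∀ σc : Ac, ∀ ra, absDelta δ P qa σu σc ra → ra ∈ Sa}
    γ upreUnder ⊆ upre (γ Sa) ∧ upre (γ Sa) ⊆ γ upreOver := by
  intro γ upre upreOver upreUnder
  constructor
  · rintro q ⟨qa, ⟨hqaP, σu, h⟩, hq⟩
    refine ⟨σu, fun σc => ?_⟩
    obtain ⟨ra, ⟨hraP, hd⟩, -⟩ := hP.2 (δ q σu σc)
    have : ra ∈ Sa := h σc ra ⟨hqaP, hraP, q, hq, hd⟩
    exact ⟨ra, this, hd⟩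
  · rintro q ⟨σu, h⟩
    obtain ⟨qa, ⟨hqaP, hq⟩, -⟩ := hP.2 q
    refine ⟨qa, ⟨hqaP, σu, fun σc => ?_⟩, hq⟩
    obtain ⟨s', hs', hd⟩ := h σc
    exact ⟨s', hs', hqaP, hSa hs', q, hq, hd⟩
end

section
/- In a conservative abstraction G^a of a finite game G with unsafe set U and abstract unsafe set U^a satisfying U ⊆ γ(U^a) and γ(U^a) ⊆ upre*(U), the least fixpoints satisfy γ(μX.(U^a ∪ upre_under(X))) ⊆ upre*(U) ⊆ γ(μX.(U^a ∪ upre_over(X))). -/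
/-- Concrete uncontrollable predecessors. -/
def upre {Q Au Ac : Type*} (δ : Q → Au → Ac → Q) (S : Set Q) : Set Q :=
  {q | ∃ σu : Au, ∀ σc : Ac, δ q σu σc ∈ S}

/-- Over-approximating abstract uncontrollable predecessors. -/
def upreOver {Q Au Ac : Type*} (δ : Q → Au → Ac → Q) (P : Set (Set Q))
    (Sa : Set (Set Q)) : Set (Set Q) :=
  {qa ∈ P | ∃ σu : Au, ∀ σc : Ac, ∃ ra ∈ Sa, absDelta δ P qa σu σc ra}

/-- Under-approximating abstract uncontrollable predecessors. -/
def upreUnder {Q Au Ac : Type*} (δ : Q → Au → Ac → Q) (P : Set (Set Q))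
    (Sa : Set (Set Q)) : Set (Set Q) :=
  {qa ∈ P | ∃ σu : Au, ∀ σc : Ac, ∀ ra, absDelta δ P qa σu σc ra → ra ∈ Sa}

/-- Least fixpoint of a set operator, à la Knaster–Tarski (intersection of prefixed points). -/
def lfpSet {α : Type*} (F : Set α → Set α) : Set α := ⋂₀ {X | F X ⊆ X}

theorem stmt_5 {Q Au Ac : Type*} [Fintype Q] [Fintype Au] [Fintype Ac]
    (δ : Q → Au → Ac → Q) (P : Set (Set Q)) (hP : Setoid.IsPartition P)
    (U : Set Q) (Ua : Set (Set Q)) (hUa : Ua ⊆ P)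
    (hU1 : U ⊆ ⋃₀ Ua) (hU2 : ⋃₀ Ua ⊆ lfpSet (fun X => U ∪ upre δ X)) :
    ⋃₀ lfpSet (fun X => Ua ∪ upreUnder δ P X) ⊆ lfpSet (fun X => U ∪ upre δ X) ∧
      lfpSet (fun X => U ∪ upre δ X) ⊆ ⋃₀ lfpSet (fun X => Ua ∪ upreOver δ P X) := by
  have lfp_le : ∀ {α : Type _} (F : Set α → Set α) (X : Set α),
      F X ⊆ X → lfpSet F ⊆ X := by
    intro α F X h a ha
    exact ha X h
  constructor
  · -- under-approximation part
    intro q hq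
    obtain ⟨qa, hqa, hqqa⟩ := hq
    -- show lfp(under) ⊆ {ra ∈ P | ra ⊆ W}
    set W := lfpSet (fun X => U ∪ upre δ X) with hW
    have key : lfpSet (fun X => Ua ∪ upreUnder δ P X) ⊆ {ra | ra ∈ P ∧ ra ⊆ W} := by
      apply lfp_le
      rintro ra (hra | hra)
      · refine ⟨hUa hra, ?_⟩
        exact fun x hx => hU2 ⟨ra, hra, hx⟩
      · obtain ⟨hraP, σu, hσu⟩ := hra
        refine ⟨hraP, fun x hx => ?_⟩
        -- x ∈ ra ⊆ upre δ W ⊆ W : show x ∈ every prefixed point X of F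
        intro X hX
        have hpre : (U ∪ upre δ X) ⊆ X := hX
        apply hpre
        right
        refine ⟨σu, fun σc => ?_⟩
        obtain ⟨sb, ⟨⟨hsbP, hsb⟩, _⟩⟩ := hP.2 (δ x σu σc)
        have : sb ∈ {ra | ra ∈ P ∧ ra ⊆ W} :=
          hσu σc sb ⟨hraP, hsbP, x, hx, hsb⟩
        exact this.2 hsb X hX
    exact (key hqa).2 hqqa
  · -- over-approximation part
    set La := lfpSet (fun X => Ua ∪ upreOver δ P X) with hLa
    have hLaP : La ⊆ P := by
      apply lfp_le
      rintro ra (hra | hra)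
      · exact hUa hra
      · exact hra.1
    have hLpre : (fun X => Ua ∪ upreOver δ P X) La ⊆ La := by
      intro ra hra X hX
      apply hX
      rcases hra with hra | hra
      · exact Or.inl hra
      · obtain ⟨hraP, σu, hσu⟩ := hra
        refine Or.inr ⟨hraP, σu, fun σc => ?_⟩
        obtain ⟨sb, hsbLa, habs⟩ := hσu σc
        exact ⟨sb, hsbLa X hX, habs⟩
    apply lfp_le
    rintro q (hq | hq)
    · obtain ⟨ua, hua, hqua⟩ := hU1 hq
      exact ⟨ua, hLpre (Or.inl hua), hqua⟩
    · obtain ⟨σu, hσu⟩ := hq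
      obtain ⟨qa, ⟨⟨hqaP, hqqa⟩, _⟩⟩ := hP.2 q
      refine ⟨qa, hLpre (Or.inr ⟨hqaP, σu, fun σc => ?_⟩), hqqa⟩
      obtain ⟨ra, hraLa, hδra⟩ := hσu σc
      exact ⟨ra, hraLa, hqaP, hLaP hraLa, q, hqqa, hδra⟩
end

section
/- Let G be a finite safety game with unsafe states U and G^a a conservative abstraction with abstract unsafe set U^a satisfying γ(U^a) = U. If the initial abstract state q_I^a is not in the least fixpoint of X ↦ U^a ∪ upre_over(X), then the concrete initial state q_I is not in upre*(U); i.e., if Eve wins the abstract game then Eve wins the concrete game. -/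
lemma lfpSet_le {α : Type*} (F : Set α → Set α) {X : Set α} (h : F X ⊆ X) :
    lfpSet F ⊆ X := Set.sInter_subset_of_mem h

lemma lfpSet_prefixed {α : Type*} {F : Set α → Set α}
    (hmono : ∀ X Y, X ⊆ Y → F X ⊆ F Y) : F (lfpSet F) ⊆ lfpSet F := by
  intro a ha
  apply Set.mem_sInter.2
  intro X hX
  exact hX (hmono _ _ (lfpSet_le F hX) ha)

theorem stmt_6 {Q Au Ac : Type*} [Fintype Q] [Fintype Au] [Fintype Ac]
    (δ : Q → Au → Ac → Q) (qI : Q)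
    (P : Set (Set Q)) (hP : Setoid.IsPartition P) (hqI : {qI} ∈ P)
    (U : Set Q) (Ua : Set (Set Q)) (hUa : Ua ⊆ P) (hGamma : ⋃₀ Ua = U)
    (hEveAbs : {qI} ∉ lfpSet (fun X => Ua ∪ upreOver δ P X)) :
    qI ∉ lfpSet (fun X => U ∪ upre δ X) := by
  set Fa : Set (Set Q) → Set (Set Q) := fun X => Ua ∪ upreOver δ P X with hFa
  have hmono : ∀ X Y : Set (Set Q), X ⊆ Y → Fa X ⊆ Fa Y := by
    intro X Y hXY a ha
    rcases ha with h | ⟨hPa, σu, hσ⟩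
    · exact Or.inl h
    · exact Or.inr ⟨hPa, σu, fun σc => by
        obtain ⟨ra, hra, hd⟩ := hσ σc
        exact ⟨ra, hXY hra, hd⟩⟩
  have hpre : Fa (lfpSet Fa) ⊆ lfpSet Fa := lfpSet_prefixed hmono
  -- all elements of lfpSet Fa lie in P
  have hlP : lfpSet Fa ⊆ P := lfpSet_le Fa (by
    intro a ha
    rcases ha with h | ⟨hPa, _⟩
    · exact hUa h
    · exact hPa)
  -- concrete prefixed point
  set S : Set Q := ⋃₀ (lfpSet Fa) with hS
  have hpreS : U ∪ upre δ S ⊆ S := by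
    intro q hq
    rcases hq with hq | ⟨σu, hσ⟩
    · rw [← hGamma] at hq
      obtain ⟨ua, hua, hqua⟩ := hq
      exact ⟨ua, hpre (Or.inl hua), hqua⟩
    · obtain ⟨qa, ⟨hqaP, hqqa⟩, _⟩ := hP.2 q
      refine ⟨qa, hpre (Or.inr ⟨hqaP, σu, fun σc => ?_⟩), hqqa⟩
      obtain ⟨ra, hra, hdra⟩ := hσ σc
      exact ⟨ra, hra, hqaP, hlP hra, q, hqqa, hdra⟩
  intro hqIlfp
  have : qI ∈ S := lfpSet_le (fun X => U ∪ upre δ X) hpreS hqIlfp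
  obtain ⟨ra, hra, hqIra⟩ := this
  -- ra is a block containing qI; {qI} also contains qI; blocks are unique
  obtain ⟨b, hb, hub⟩ := hP.2 qI
  have h1 : ra = b := hub ra ⟨hlP hra, hqIra⟩
  have h2 : ({qI} : Set Q) = b := hub {qI} ⟨hqI, rfl⟩
  exact hEveAbs (h2 ▸ h1 ▸ hra)
end

section
/- Let λ̃ be the quasi-strategy for Adam defined from W = μX.(U^a ∪ upre_over(X)) by λ̃(q^a) = { σ_u | ∀σ_c, ∃s ∈ W, (q^a, σ_u, σ_c, s) ∈ Δ^a }, and let its concretization be γ(λ̃)(q) = λ̃(ᾱ(q)) where ᾱ(q) is the partition block containing q. If λ_A is a memoryless winning strategy for Adam in the concrete safety game G (with objective reaching U), then for every play π consistent with λ_A and every index i strictly before the first visit of π to U, λ_A(π[i]) ∈ γ(λ̃)(π[i]). -/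
/-- A play `π` from `qI` is consistent with the memoryless Adam strategy `λA`
if at each step Adam plays `λA` and Eve plays some controllable action. -/
def ConsistentAdam {Q Au Ac : Type*} (δ : Q → Au → Ac → Q) (qI : Q)
    (lamA : Q → Au) (π : ℕ → Q) : Prop :=
  π 0 = qI ∧ ∀ i, ∃ σc : Ac, π (i + 1) = δ (π i) (lamA (π i)) σc

/-- The memoryless Adam strategy `λA` is winning: every consistent play visits `U`. -/
def AdamWinning {Q Au Ac : Type*} (δ : Q → Au → Ac → Q) (qI : Q) (U : Set Q)
    (lamA : Q → Au) : Prop :=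
  ∀ π : ℕ → Q, ConsistentAdam δ qI lamA π → ∃ i, π i ∈ U

private lemma lfp_pre {α : Type*} {F : Set α → Set α} (hm : Monotone F) :
    F (lfpSet F) ⊆ lfpSet F := by
  intro x hx
  refine Set.mem_sInter.mpr (fun X hX => ?_)
  have h1 : lfpSet F ⊆ X := Set.sInter_subset_of_mem hX
  exact hX (hm h1 hx)

private lemma upre_mono {Q Au Ac : Type*} (δ : Q → Au → Ac → Q) (P : Set (Set Q)) :
    Monotone (upreOver δ P) := by
  intro S T hST x hx
  obtain ⟨hxP, σu, hσu⟩ := hx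
  exact ⟨hxP, σu, fun σc => by obtain ⟨ra, hra, h⟩ := hσu σc; exact ⟨ra, hST hra, h⟩⟩

/-- Pumping: in a finite arena, a winning memoryless strategy wins within `card Q` steps. -/
private lemma pump {Q Au Ac : Type*} [Fintype Q] (δ : Q → Au → Ac → Q) (U : Set Q)
    (lamA : Q → Au) (q : Q)
    (h : ∀ ρ : ℕ → Q, ConsistentAdam δ q lamA ρ → ∃ k, ρ k ∈ U) :
    ∀ ρ : ℕ → Q, ConsistentAdam δ q lamA ρ → ∃ k ≤ Fintype.card Q, ρ k ∈ U := by
  intro ρ hρ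
  by_contra hc
  push_neg at hc
  obtain ⟨a, b, hne, hab⟩ := Fintype.exists_ne_map_eq_of_card_lt
    (fun m : Fin (Fintype.card Q + 1) => ρ m) (by simp)
  -- wlog j < k
  wlog hlt : (a : ℕ) < (b : ℕ) generalizing a b
  · exact this b a hne.symm hab.symm (by have := Fin.val_ne_of_ne hne; omega)
  set j := (a : ℕ)
  set k := (b : ℕ)
  have hkQ : k ≤ Fintype.card Q := by omega
  have hd : 0 < k - j := by omega
  set f : ℕ → ℕ := fun m => if m < j then m else j + (m - j) % (k - j) with hf
  have hfb : ∀ m, f m ≤ Fintype.card Q := by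
    intro m
    simp only [hf]
    split
    · omega
    · have := Nat.mod_lt (m - j) hd; omega
  have hf0 : f 0 = 0 := by simp only [hf]; split; · rfl
                           · simp; omega
  have hstep : ∀ m, ρ (f (m + 1)) = ρ (f m + 1) := by
    intro m
    by_cases hm : m < j
    · by_cases hm1 : m + 1 < j
      · simp only [hf, if_pos hm, if_pos hm1]
      · simp only [hf, if_pos hm, if_neg hm1]
        have h0 : m + 1 - j = 0 := by omega
        rw [h0, Nat.zero_mod]
        congr 1
        omega
    · have hr : (m - j) % (k - j) < k - j := Nat.mod_lt _ hd
      by_cases hlast : (m - j) % (k - j) = k - j - 1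
      · have h1 : f m + 1 = k := by simp only [hf, if_neg hm]; omega
        have h2 : f (m + 1) = j := by
          simp only [hf, if_neg (by omega : ¬ m + 1 < j)]
          have : m + 1 - j = (m - j) + 1 := by omega
          rw [this, Nat.add_mod, hlast]
          rcases Nat.lt_or_ge 1 (k - j) with h1 | h1
          · rw [Nat.mod_eq_of_lt h1, Nat.sub_add_cancel hd, Nat.mod_self]
            omega
          · have hkj : k - j = 1 := by omega
            simp [hkj]
        rw [h1, h2]
        exact hab
      · have h2 : f (m + 1) = f m + 1 := by
          simp only [hf, if_neg hm, if_neg (by omega : ¬ m + 1 < j)]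
          have : m + 1 - j = (m - j) + 1 := by omega
          rw [this, Nat.add_mod]
          have : ((m - j) % (k - j) + 1 % (k - j)) % (k - j) = (m - j) % (k - j) + 1 := by
            rcases Nat.lt_or_ge 1 (k - j) with h1 | h1
            · rw [Nat.mod_eq_of_lt h1, Nat.mod_eq_of_lt (by omega)]
            · omega
          rw [this]
          omega
        rw [h2]
  have hcons : ConsistentAdam δ q lamA (fun m => ρ (f m)) := by
    constructor
    · simp [hf0, hρ.1]
    · intro i
      obtain ⟨σc, hσc⟩ := hρ.2 (f i)
      refine ⟨σc, ?_⟩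
      show ρ (f (i + 1)) = δ (ρ (f i)) (lamA (ρ (f i))) σc
      rw [hstep i]; exact hσc
  obtain ⟨kk, hkk⟩ := h _ hcons
  exact hc (f kk) (hfb kk) hkk

/-- Key lemma: if all `lamA`-plays from `q` reach `U` within `n` steps, the block of `q` is in `W`. -/
private lemma key {Q Au Ac : Type*} (δ : Q → Au → Ac → Q) (U : Set Q)
    (P : Set (Set Q)) (hP : Setoid.IsPartition P)
    (Ua : Set (Set Q)) (hUa : Ua ⊆ P) (hU : U ⊆ ⋃₀ Ua)
    (W : Set (Set Q)) (hW : W = lfpSet (fun X => Ua ∪ upreOver δ P X))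
    (lamA : Q → Au) (σc0 : Ac) :
    ∀ n (q : Q), (∀ ρ : ℕ → Q, ConsistentAdam δ q lamA ρ → ∃ k ≤ n, ρ k ∈ U) →
      ∃ b ∈ P, q ∈ b ∧ b ∈ W := by
  have hmono : Monotone (fun X => Ua ∪ upreOver δ P X) :=
    fun S T hST => Set.union_subset_union_right _ (upre_mono δ P hST)
  have hFW : Ua ∪ upreOver δ P W ⊆ W := by rw [hW]; exact lfp_pre hmono
  have hWP : W ⊆ P := by
    rw [hW]
    refine Set.sInter_subset_of_mem ?_
    refine Set.union_subset hUa (fun x hx => hx.1)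
  have hUcase : ∀ q : Q, q ∈ U → ∃ b ∈ P, q ∈ b ∧ b ∈ W := by
    intro q hq
    obtain ⟨b, hb, hqb⟩ := hU hq
    exact ⟨b, hUa hb, hqb, hFW (Or.inl hb)⟩
  intro n
  induction n with
  | zero =>
    intro q hq
    have hplay : ConsistentAdam δ q lamA
        (fun m => Nat.rec q (fun _ p => δ p (lamA p) σc0) m) := ⟨rfl, fun i => ⟨σc0, rfl⟩⟩
    obtain ⟨k, hk0, hkU⟩ := hq _ hplay
    interval_cases k
    exact hUcase q hkU
  | succ n ih =>
    intro q hq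
    by_cases hqU : q ∈ U
    · exact hUcase q hqU
    obtain ⟨b, ⟨hbP, hqb⟩, _⟩ := hP.2 q
    refine ⟨b, hbP, hqb, hFW (Or.inr ⟨hbP, lamA q, fun σc => ?_⟩)⟩
    have hargs : ∀ ρ' : ℕ → Q, ConsistentAdam δ (δ q (lamA q) σc) lamA ρ' →
        ∃ k ≤ n, ρ' k ∈ U := by
      intro ρ' hρ'
      have hρc : ConsistentAdam δ q lamA
          (fun m => Nat.rec q (fun i _ => ρ' i) m) := by
        refine ⟨rfl, fun i => ?_⟩
        cases i with
        | zero => exact ⟨σc, hρ'.1⟩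
        | succ i => obtain ⟨σu, h⟩ := hρ'.2 i; exact ⟨σu, h⟩
      obtain ⟨k, hk, hkU⟩ := hq _ hρc
      cases k with
      | zero => exact absurd hkU hqU
      | succ k => exact ⟨k, by omega, hkU⟩
    obtain ⟨b', hb'P, hq'b', hb'W⟩ := ih (δ q (lamA q) σc) hargs
    exact ⟨b', hb'W, hbP, hb'P, q, hqb, hq'b'⟩

theorem stmt_7 {Q Au Ac : Type*} [Fintype Q] [Fintype Au] [Fintype Ac]
    (δ : Q → Au → Ac → Q) (qI : Q) (U : Set Q)
    (P : Set (Set Q)) (hP : Setoid.IsPartition P)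
    (Ua : Set (Set Q)) (hUa : Ua ⊆ P) (hU : U ⊆ ⋃₀ Ua)
    -- W = μX.(U^a ∪ upre_over(X)) and the induced quasi-strategy λ̃ for Adam
    (W : Set (Set Q)) (hW : W = lfpSet (fun X => Ua ∪ upreOver δ P X))
    (lamTilde : Set Q → Set Au)
    (hlam : ∀ qa, lamTilde qa = {σu | ∀ σc : Ac, ∃ s ∈ W, absDelta δ P qa σu σc s})
    (lamA : Q → Au) (hwin : AdamWinning δ qI U lamA) :
    ∀ π : ℕ → Q, ConsistentAdam δ qI lamA π →
      ∀ i, (∀ j ≤ i, π j ∉ U) →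
        ∃ b ∈ P, π i ∈ b ∧ lamA (π i) ∈ lamTilde b := by

  intro π hπ i hnotU
  obtain ⟨σc0, _⟩ := hπ.2 0
  obtain ⟨b, ⟨hbP, hib⟩, _⟩ := hP.2 (π i)
  refine ⟨b, hbP, hib, ?_⟩
  rw [hlam]
  intro σc
  set q' := δ (π i) (lamA (π i)) σc with hq'
  have hwin' : ∀ ρ : ℕ → Q, ConsistentAdam δ q' lamA ρ → ∃ k, ρ k ∈ U := by
    intro ρ hρ
    set σ : ℕ → Q := fun m => if m ≤ i then π m else ρ (m - i - 1) with hσ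
    have hσc : ConsistentAdam δ qI lamA σ := by
      constructor
      · simp only [hσ, if_pos (Nat.zero_le i)]; exact hπ.1
      · intro m
        rcases Nat.lt_trichotomy m i with hm | hm | hm
        · obtain ⟨c, hc⟩ := hπ.2 m
          refine ⟨c, ?_⟩
          simp only [hσ, if_pos (by omega : m + 1 ≤ i), if_pos (by omega : m ≤ i)]
          exact hc
        · subst hm
          refine ⟨σc, ?_⟩
          simp only [hσ, if_neg (by omega : ¬ m + 1 ≤ m), if_pos le_rfl]
          have : m + 1 - m - 1 = 0 := by omega
          rw [this, hρ.1]
        · obtain ⟨c, hc⟩ := hρ.2 (m - i - 1)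
          refine ⟨c, ?_⟩
          simp only [hσ, if_neg (by omega : ¬ m + 1 ≤ i), if_neg (by omega : ¬ m ≤ i)]
          have h1 : m + 1 - i - 1 = (m - i - 1) + 1 := by omega
          rw [h1]
          exact hc
    obtain ⟨k, hk⟩ := hwin σ hσc
    have hki : ¬ k ≤ i := fun hle => hnotU k hle (by simpa [hσ, if_pos hle] using hk)
    refine ⟨k - i - 1, ?_⟩
    simpa [hσ, if_neg hki] using hk
  obtain ⟨b', hb'P, hq'b', hb'W⟩ := key δ U P hP Ua hUa hU W hW lamA σc0 (Fintype.card Q) q'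
    (pump δ U lamA q' hwin')
  exact ⟨b', hb'W, hbP, hb'P, π i, hib, hq'b'⟩
end
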